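/- Consider n = 2 with q₁₁ = q₂₂ = 1, q₁₂ = q₂₁ = 10, k₀₁ = k₀₂ = 1, k₁₂ = 10, r₁ = r₂ = 0, and define for u = (u₁,u₂) in the open simplex D the matrix G(u) = γ(u) · [[(9u₁² + (90u₂+1)u₁ + 5u₂)u₂, (90u₁ + 9u₂ + 5)u₁u₂],[(9u₁ + 90u₂ + 5)u₁u₂, (9u₂² + (90u₁+1)u₂ + 5u₁)u₁]], where γ(u) = 2/(1 + 9u₁ + 9u₂). Then there exists u ∈ D (for instance u = (0.15, 0.65)) such that the symmetric part of G(u) has a negative eigenvalue; i.e., there exists z ∈ ℝ² with zᵀ G(u) z < 0. -/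
import Mathlib

/-- The entropy-transformed diffusion matrix `G(u) = h_B''(u) K(u)⁻¹ A(u)` for the
specific coefficients `q₁₁ = q₂₂ = 1`, `q₁₂ = q₂₁ = 10`, `k₀₁ = k₀₂ = 1`, `k₁₂ = 10`. -/
noncomputable def Gmat (u₁ u₂ : ℝ) : Matrix (Fin 2) (Fin 2) ℝ :=
  (2 / (1 + 9 * u₁ + 9 * u₂)) •
    Matrix.of
      ![![(9 * u₁ ^ 2 + (90 * u₂ + 1) * u₁ + 5 * u₂) * u₂,
          (90 * u₁ + 9 * u₂ + 5) * u₁ * u₂],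
        ![(9 * u₁ + 90 * u₂ + 5) * u₁ * u₂,
          (9 * u₂ ^ 2 + (90 * u₁ + 1) * u₂ + 5 * u₁) * u₁]]

theorem stmt_14 :
    ∃ u₁ u₂ : ℝ, 0 < u₁ ∧ 0 < u₂ ∧ u₁ + u₂ < 1 ∧
      ∃ z : Fin 2 → ℝ, ∑ i, ∑ j, z i * Gmat u₁ u₂ i j * z j < 0 := by
  refine ⟨0.15, 0.65, by norm_num, by norm_num, by norm_num, ![-1, 2], ?_⟩
  simp [Gmat, Fin.sum_univ_two, Matrix.smul_apply]
  norm_num
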